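/- arXiv:2003.01435 — 2 statements merged into one kernel-verified Lean document; each statement's English description precedes it below -/
import Mathlib

section
/- Let B ⊆ A be central hyperplane arrangements in V = K^ℓ, both free, and suppose θ_1,...,θ_ℓ is a basis of D(B) such that θ_i ∈ D(A) for 1 ≤ i ≤ ℓ−q. Let X ∈ L(A) be an intersection of hyperplanes of A such that no hyperplane of B contains X (i.e. A_X ∩ B = ∅). Then rk(X) = ℓ − dim(X) ≤ q. -/
open MvPolynomial

noncomputable def linForm {K : Type*} [CommRing K] {ℓ : ℕ} (c : Fin ℓ → K) :
    MvPolynomial (Fin ℓ) K :=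
  ∑ i, MvPolynomial.C (c i) * MvPolynomial.X i

noncomputable def dualForm {K : Type*} [Field K] {ℓ : ℕ} (c : Fin ℓ → K) :
    (Fin ℓ → K) →ₗ[K] K :=
  ∑ i, c i • LinearMap.proj i

lemma dualForm_apply {K : Type*} [Field K] {ℓ : ℕ} (c w : Fin ℓ → K) :
    dualForm c w = ∑ j, c j * w j := by
  simp [dualForm]

lemma eval_deriv_linForm {K : Type*} [Field K] {ℓ : ℕ}
    (D : Derivation K (MvPolynomial (Fin ℓ) K) (MvPolynomial (Fin ℓ) K))
    (c : Fin ℓ → K) (z : Fin ℓ → K) :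
    eval z (D (linForm c)) = dualForm c (fun j => eval z (D (X j))) := by
  have : D (linForm c) = ∑ j, C (c j) * D (X j) := by
    rw [linForm, map_sum]
    refine Finset.sum_congr rfl fun j _ => ?_
    rw [← smul_eq_C_mul, ← smul_eq_C_mul, Derivation.map_smul]
  rw [this, dualForm_apply]
  simp

lemma eval_linForm {K : Type*} [Field K] {ℓ : ℕ} (c z : Fin ℓ → K) :
    eval z (linForm c) = dualForm c z := by
  simp [linForm, dualForm_apply]

/-- Proposition 2.11: let `B ⊆ A` be free central arrangements in `K^ℓ`, let
`θ_1,…,θ_ℓ` be an `S`-basis of `D(B)` with `θ_i ∈ D(A)` for `1 ≤ i ≤ ℓ−q` (0-indexed: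
`i.val < ℓ − q`), and let `X ∈ L(A)` be an intersection of hyperplanes of `A` not
contained in any hyperplane of `B` (`A_X ∩ B = ∅`).  Then
`rk(X) = ℓ − dim X ≤ q`, i.e. `dim X ≥ ℓ − q`. -/
theorem statement3 {K : Type*} [Field K] [CharZero K] {ℓ : ℕ}
    (A B : Finset (Fin ℓ → K)) (hA : ∀ c ∈ A, c ≠ 0) (hBA : B ⊆ A)
    (q : ℕ) (hq : q ≤ ℓ)
    (θ : Fin ℓ → Derivation K (MvPolynomial (Fin ℓ) K) (MvPolynomial (Fin ℓ) K))
    (hθB : ∀ i, ∀ c ∈ B, θ i (linForm c) ∈ Ideal.span {linForm c})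
    (hindep : LinearIndependent (MvPolynomial (Fin ℓ) K) θ)
    (hspan : ∀ η : Derivation K (MvPolynomial (Fin ℓ) K) (MvPolynomial (Fin ℓ) K),
      (∀ c ∈ B, η (linForm c) ∈ Ideal.span {linForm c}) →
      η ∈ Submodule.span (MvPolynomial (Fin ℓ) K) (Set.range θ))
    (hθA : ∀ i : Fin ℓ, (i : ℕ) < ℓ - q → ∀ c ∈ A,
      θ i (linForm c) ∈ Ideal.span {linForm c})
    (X : Submodule K (Fin ℓ → K))
    (hX : ∃ Carr : Finset (Fin ℓ → K), Carr ⊆ A ∧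
      X = ⨅ c ∈ Carr, LinearMap.ker (dualForm c))
    (hXB : ∀ c ∈ B, ¬ X ≤ LinearMap.ker (dualForm c)) :
    ℓ - q ≤ Module.finrank K X := by
  classical
  obtain ⟨Carr, hCA, hXdef⟩ := hX
  -- Step 1: pick z ∈ X avoiding all hyperplanes of B
  obtain ⟨z, hzX, hzB⟩ : ∃ z ∈ X, ∀ c ∈ B, dualForm c z ≠ 0 := by
    by_contra h
    push_neg at h
    set s : Finset (Subspace K X) :=
      B.image (fun c => (LinearMap.ker (dualForm c)).comap X.subtype) with hs
    have htop : ⊤ ∈ s := by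
      apply Subspace.top_mem_of_biUnion_eq_univ (s := s)
      ext w
      simp only [Set.mem_iUnion, Set.mem_univ, iff_true]
      obtain ⟨c, hc, hc0⟩ := h w w.2
      exact ⟨_, Finset.mem_image_of_mem _ hc, by
        simpa [Submodule.mem_comap, LinearMap.mem_ker] using hc0⟩
    obtain ⟨c, hc, hceq⟩ := Finset.mem_image.1 htop
    exact hXB c hc (Submodule.comap_subtype_eq_top.1 hceq)
  -- The evaluated vectors
  set v : Fin ℓ → (Fin ℓ → K) := fun i j => eval z (θ i (MvPolynomial.X j)) with hv
  -- z lies in every hyperplane of Carr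
  have hzC : ∀ c ∈ Carr, dualForm c z = 0 := by
    intro c hc
    have : X ≤ LinearMap.ker (dualForm c) := by
      rw [hXdef]
      exact iInf_le_of_le c (iInf_le _ hc)
    exact this hzX
  -- Step 2: for i < ℓ - q, v i ∈ X
  have hv_mem : ∀ i : Fin ℓ, (i : ℕ) < ℓ - q → v i ∈ X := by
    intro i hi
    rw [hXdef]
    simp only [Submodule.mem_iInf, LinearMap.mem_ker]
    intro c hc
    obtain ⟨g, hg⟩ := Ideal.mem_span_singleton'.1 (hθA i hi c (hCA hc))
    have := eval_deriv_linForm (θ i) c z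
    rw [← hg] at this
    have h2 : eval z (g * linForm c) = 0 := by
      rw [map_mul, eval_linForm, hzC c hc, mul_zero]
    rw [h2] at this
    exact this.symm
  -- Step 3: the v i span K^ℓ
  set Q : MvPolynomial (Fin ℓ) K := ∏ c ∈ B, linForm c with hQ
  have hQz : eval z Q ≠ 0 := by
    rw [hQ, map_prod]
    exact Finset.prod_ne_zero_iff.2 fun c hc => by
      rw [eval_linForm]; exact hzB c hc
  have hspanv : ⊤ ≤ Submodule.span K (Set.range v) := by
    have hbasis : ∀ j : Fin ℓ, Pi.single j (1 : K) ∈ Submodule.span K (Set.range v) := by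
      intro j
      set η : Derivation K (MvPolynomial (Fin ℓ) K) (MvPolynomial (Fin ℓ) K) :=
        Q • pderiv j with hη
      have hηB : ∀ c ∈ B, η (linForm c) ∈ Ideal.span {linForm c} := by
        intro c hc
        rw [hη, Derivation.smul_apply, smul_eq_mul]
        exact Ideal.mem_span_singleton.2
          ((Finset.dvd_prod_of_mem _ hc).mul_right _)
      obtain ⟨f, hf⟩ := (Submodule.mem_span_range_iff_exists_fun _).1 (hspan η hηB)
      have key : (eval z Q) • (Pi.single j 1 : Fin ℓ → K) = ∑ i, eval z (f i) • v i := by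
        funext k
        have h1 : η (MvPolynomial.X k) = Q * pderiv j (MvPolynomial.X k) := by
          rw [hη, Derivation.smul_apply, smul_eq_mul]
        have h2 : (∑ i, f i • θ i) (MvPolynomial.X k) = η (MvPolynomial.X k) := by rw [hf]
        have h3 : (∑ i, f i • θ i : Derivation K _ _) (MvPolynomial.X k) = ∑ i, f i * θ i (MvPolynomial.X k) := by
          have h := map_sum ((Pi.evalAddMonoidHom
              (fun _ : MvPolynomial (Fin ℓ) K => MvPolynomial (Fin ℓ) K)
              (MvPolynomial.X k)).comp
              (Derivation.coeFnAddMonoidHom :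
                Derivation K (MvPolynomial (Fin ℓ) K) (MvPolynomial (Fin ℓ) K) →+ _))
              (fun i => f i • θ i) Finset.univ
          simp only [AddMonoidHom.coe_comp, Function.comp_apply,
            Pi.evalAddMonoidHom_apply] at h
          have h' : ((∑ i, f i • θ i : Derivation K _ _) (MvPolynomial.X k)) =
              ∑ i, (f i • θ i) (MvPolynomial.X k) := h
          rw [h']
          refine Finset.sum_congr rfl fun i _ => ?_
          rw [Derivation.smul_apply, smul_eq_mul]
        have h4 : eval z (∑ i, f i * θ i (MvPolynomial.X k)) = eval z (Q * pderiv j (MvPolynomial.X k)) := by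
          rw [← h3, h2, h1]
        simp only [map_sum, map_mul] at h4
        have : (∑ i, eval z (f i) • v i) k = ∑ i, eval z (f i) * v i k := by
          simp
        rw [this]
        have hvk : ∀ i, v i k = eval z (θ i (MvPolynomial.X k)) := fun i => rfl
        simp only [hvk]
        rw [h4]
        rcases eq_or_ne j k with rfl | hjk
        · simp [pderiv_X_self]
        · simp [pderiv_X_of_ne hjk, Pi.single_apply, Ne.symm hjk]
      have : Pi.single j (1 : K) = (eval z Q)⁻¹ • ∑ i, eval z (f i) • v i := by
        rw [← key, smul_smul, inv_mul_cancel₀ hQz, one_smul]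
      rw [this]
      exact Submodule.smul_mem _ _ (Submodule.sum_mem _ fun i _ =>
        Submodule.smul_mem _ _ (Submodule.subset_span ⟨i, rfl⟩))
    intro w _
    have : w ∈ Submodule.span K (Set.range fun j => Pi.single j (1 : K)) := by
      have := (Pi.basisFun K (Fin ℓ)).span_eq
      simp only [Pi.basisFun] at this
      have hmem : w ∈ (⊤ : Submodule K (Fin ℓ → K)) := trivial
      rw [← (Pi.basisFun K (Fin ℓ)).span_eq] at hmem
      refine Submodule.span_mono ?_ hmem
      rintro x ⟨i, rfl⟩
      exact ⟨i, by simp [Pi.basisFun_apply]⟩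
    refine Submodule.span_le.2 ?_ this
    rintro x ⟨i, rfl⟩
    exact hbasis i
  have hv_indep : LinearIndependent K v :=
    linearIndependent_of_top_le_span_of_card_eq_finrank hspanv (by simp)
  -- Step 4: restrict to the first ℓ - q vectors, landing in X
  set w : Fin (ℓ - q) → X := fun k =>
    ⟨v (Fin.castLE (Nat.sub_le ℓ q) k), hv_mem _ (by simpa using k.2)⟩ with hw
  have hw_indep : LinearIndependent K w := by
    apply LinearIndependent.of_comp X.subtype
    have : X.subtype ∘ w = v ∘ Fin.castLE (Nat.sub_le ℓ q) := rfl
    rw [this]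
    exact hv_indep.comp _ (Fin.castLE_injective _)
  have := hw_indep.fintype_card_le_finrank
  simpa using this
end

section
/- Let A = A^k_ℓ(r) be the intermediate arrangement with exponents exp(A) = (1, r+1, 2r+1, ..., (ℓ−2)r+1, (ℓ−1)r − ℓ + k + 1), for ℓ ≥ 4, r ≥ 3, and 1 ≤ k ≤ ℓ−1 with r + k < ℓ. The possible exponent sequences of restrictions A^H for hyperplanes H ∈ A are those of A^{k−1}_{ℓ−1}(r), A^k_{ℓ−1}(r), A^{k+1}_{ℓ−1}(r), and A^{ℓ−1}_{ℓ−1}(r), namely (1, r+1, ..., (ℓ−3)r+1, (ℓ−2)r − (ℓ−1) + k') for k' ∈ {k−1, k, k+1, ℓ−1}. None of these equals the sequence (1, r+1, ..., (ℓ−2)r+1) of the ℓ−1 smallest exponents of A. Hence there is no hyperplane restriction realizing the ℓ−1 smallest exponents of A. -/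
/-- Lemma 6.5(ii) (failure of accuracy for intermediate arrangements, cf. Example 6.6):
let `A = A^k_ℓ(r)` with `ℓ ≥ 4`, `r ≥ 3`, `1 ≤ k ≤ ℓ−1` and `r + k < ℓ`, with exponent
multiset `exp(A) = {1, r+1, …, (ℓ−2)r+1} ∪ {(ℓ−1)r−ℓ+k+1}`.  The exponent multisets of
the hyperplane restrictions `A^H` are those of `A^{k'}_{ℓ−1}(r)` for
`k' ∈ {k−1, k, k+1, ℓ−1}`, namely `{1, r+1, …, (ℓ−3)r+1} ∪ {(ℓ−2)r−(ℓ−1)+k'+1}`.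
Then the largest exponent of `A` is `(ℓ−2)r+1`, and no restriction exponent multiset
equals the multiset of the `ℓ−1` smallest exponents of `A` (i.e. `exp(A)` with one copy
of its largest element `(ℓ−2)r+1` removed).  Hence no hyperplane restriction realizes
the `ℓ−1` smallest exponents of `A`. -/
theorem statement14 (ℓ r k : ℕ) (hl : 4 ≤ ℓ) (hr : 3 ≤ r)
    (hk1 : 1 ≤ k) (hk2 : k ≤ ℓ - 1) (hrk : r + k < ℓ)
    (expA : Multiset ℤ)
    (hexpA : expA =
      Multiset.map (fun j : Fin (ℓ - 1) => ((j : ℕ) : ℤ) * r + 1) Finset.univ.val +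
        {((ℓ : ℤ) - 1) * r - ℓ + k + 1})
    (restExp : ℕ → Multiset ℤ)
    (hrest : ∀ k', restExp k' =
      Multiset.map (fun j : Fin (ℓ - 2) => ((j : ℕ) : ℤ) * r + 1) Finset.univ.val +
        {((ℓ : ℤ) - 2) * r - ((ℓ : ℤ) - 1) + k' + 1}) :
    ((ℓ : ℤ) - 1) * r - ℓ + k + 1 < ((ℓ : ℤ) - 2) * r + 1 ∧
      ∀ k' ∈ ({k - 1, k, k + 1, ℓ - 1} : Finset ℕ),
        restExp k' ≠ expA.erase (((ℓ : ℤ) - 2) * r + 1) := by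

  obtain ⟨m, rfl⟩ := Nat.exists_eq_add_of_le hl
  have h1 : 4 + m - 1 = m + 3 := by omega
  have h2 : 4 + m - 2 = m + 2 := by omega
  rw [h1] at hexpA
  rw [h2] at hrest
  -- membership of the largest exponent in expA
  have hmem : ((4 + (m:ℤ)) - 2) * r + 1 ∈ expA := by
    rw [hexpA]
    refine Multiset.mem_add.2 (Or.inl ?_)
    refine Multiset.mem_map.2 ⟨⟨m + 2, by omega⟩, (by rw [Finset.mem_val]; exact Finset.mem_univ _), ?_⟩
    push_cast
    ring
  have hmem' : (((4 + m : ℕ) : ℤ) - 2) * r + 1 ∈ expA := by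
    push_cast at hmem ⊢; exact hmem
  constructor
  · push_cast
    have : (r:ℤ) + k < 4 + m := by exact_mod_cast hrk
    nlinarith
  · intro k' hk' heq
    have hsum := congrArg Multiset.sum heq
    have herase : (expA.erase ((((4 + m : ℕ) : ℤ) - 2) * r + 1)).sum
        = expA.sum - ((((4 + m : ℕ) : ℤ) - 2) * r + 1) := by
      have := Multiset.sum_erase hmem'
      linarith
    rw [hrest k', herase, hexpA] at hsum
    simp only [Multiset.sum_add, Multiset.sum_singleton] at hsum
    have hsplit : (Multiset.map (fun j : Fin (m + 3) => ((j : ℕ) : ℤ) * r + 1) Finset.univ.val).sum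
        = (Multiset.map (fun j : Fin (m + 2) => ((j : ℕ) : ℤ) * r + 1) Finset.univ.val).sum
          + (((m : ℤ) + 2) * r + 1) := by
      have : ∑ j : Fin (m + 3), (((j : ℕ) : ℤ) * r + 1)
          = ∑ j : Fin (m + 2), (((j : ℕ) : ℤ) * r + 1) + (((m : ℤ) + 2) * r + 1) := by
        rw [Fin.sum_univ_castSucc]
        simp only [Fin.coe_castSucc, Fin.val_last]
        push_cast
        ring
      simpa [Finset.sum] using this
    rw [hsplit] at hsum
    push_cast at hsum
    have hk'' : (k' : ℤ) = r + k - 1 := by linarith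
    have hm : (r : ℤ) + k < 4 + m := by exact_mod_cast hrk
    simp only [Finset.mem_insert, Finset.mem_singleton] at hk'
    rcases hk' with rfl | rfl | rfl | rfl <;> omega
end
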